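/- Let φ be a linear form with rational coefficients satisfying property N, P₀ a nonempty finite set of primes, A' a finite set of integers, and b an integer. For every ε > 0 there are infinitely many positive integers a with |a − b|_p < ε for all p ∈ P₀ such that the sets Φ_J(A',a), for all J ⊆ {1,…,h}, are pairwise disjoint. -/
import Mathlib

open Finset

variable {F : Type*} [Field F] {V : Type*} [AddCommGroup V] [Module F V]

/-- The linear form with coefficients `c` has property N: there do not exist disjoint
subsets `I₁`, `I₂` of `{1,…,h}`, not both empty, with equal coefficient subset sums. -/
def PropN {h : ℕ} (c : Fin h → F) : Prop :=
  ¬ ∃ I₁ I₂ : Finset (Fin h), Disjoint I₁ I₂ ∧ ¬(I₁ = ∅ ∧ I₂ = ∅) ∧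
      ∑ i ∈ I₁, c i = ∑ i ∈ I₂, c i

/-- `A` is a Sidon set for the linear form `φ = ∑ cᵢ xᵢ`. -/
def IsSidonSet {h : ℕ} (c : Fin h → F) (A : Set V) : Prop :=
  A.Nonempty ∧ ∀ a a' : Fin h → V, (∀ i, a i ∈ A) → (∀ i, a' i ∈ A) →
    ∑ i, c i • a i = ∑ i, c i • a' i → a = a'

/-- `Φ_J(A,b) = φ_J(A) + (∑_{j ∈ Jᶜ} c_j) • b`. -/
def PhiJ {h : ℕ} (c : Fin h → F) (J : Finset (Fin h)) (A : Set V) (b : V) : Set V :=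
  {w | ∃ f : Fin h → V, (∀ j ∈ J, f j ∈ A) ∧
    w = (∑ j ∈ J, c j • f j) + (∑ j ∈ Jᶜ, c j) • b}

lemma propN_sum_compl_ne {h : ℕ} {c : Fin h → ℚ} (hN : PropN c)
    {J₁ J₂ : Finset (Fin h)} (hne : J₁ ≠ J₂) :
    ∑ j ∈ J₂ᶜ, c j ≠ ∑ j ∈ J₁ᶜ, c j := by
  intro heq
  apply hN
  refine ⟨J₂ᶜ \ J₁ᶜ, J₁ᶜ \ J₂ᶜ, disjoint_sdiff_sdiff, ?_, ?_⟩
  · rintro ⟨h1, h2⟩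
    apply hne
    have hcc : J₁ᶜ = J₂ᶜ := by
      apply Finset.Subset.antisymm <;> intro x hx <;> by_contra hx2
      · exact absurd (Finset.mem_sdiff.mpr ⟨hx, hx2⟩) (by simp [h2])
      · exact absurd (Finset.mem_sdiff.mpr ⟨hx, hx2⟩) (by simp [h1])
    simpa using congrArg (·ᶜ) hcc
  · have e1 := Finset.sum_inter_add_sum_sdiff J₂ᶜ J₁ᶜ c
    have e2 := Finset.sum_inter_add_sum_sdiff J₁ᶜ J₂ᶜ c
    rw [Finset.inter_comm] at e2
    linarith

theorem padic_perturbation_PhiJ_disjoint {h : ℕ} (c : Fin h → ℚ) (hN : PropN c)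
    (P₀ : Finset ℕ) (hP₀ : P₀.Nonempty) (hP₀p : ∀ p ∈ P₀, p.Prime)
    (A' : Finset ℤ) (b : ℤ) (ε : ℝ) (hε : 0 < ε) :
    {a : ℕ | 0 < a ∧ (∀ p ∈ P₀, ((padicNorm p ((a : ℚ) - (b : ℚ))) : ℝ) < ε) ∧
      ∀ J₁ J₂ : Finset (Fin h), J₁ ≠ J₂ →
        Disjoint (PhiJ c J₁ ((fun n : ℤ => (n : ℚ)) '' ↑A') (a : ℚ))
                 (PhiJ c J₂ ((fun n : ℤ => (n : ℚ)) '' ↑A') (a : ℚ))}.Infinite := by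
  classical
  obtain ⟨k, hk⟩ : ∃ k : ℕ, ((2:ℝ)⁻¹)^k < ε := exists_pow_lt_of_lt_one hε (by norm_num)
  set N : ℤ := ∏ p ∈ P₀, (p : ℤ)^k with hNdef
  have hNpos : 0 < N :=
    Finset.prod_pos fun p hp => pow_pos (by exact_mod_cast (hP₀p p hp).pos) k
  set D : Finset (Fin h) → Finset (Fin h) → ℚ :=
    fun J₁ J₂ => ∑ j ∈ J₂ᶜ, c j - ∑ j ∈ J₁ᶜ, c j with hDdef
  have hD : ∀ J₁ J₂ : Finset (Fin h), J₁ ≠ J₂ → D J₁ J₂ ≠ 0 := fun J₁ J₂ hne =>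
    sub_ne_zero.mpr (propN_sum_compl_ne hN hne)
  set S0 : Set ℚ := insert 0 ((fun n : ℤ => (n:ℚ)) '' ↑A') with hS0def
  have hS0 : S0.Finite := (A'.finite_toSet.image _).insert 0
  set B : Set ℚ := { x | ∃ J₁ J₂ : Finset (Fin h), J₁ ≠ J₂ ∧ ∃ f g : Fin h → ℚ,
    (∀ j, f j ∈ S0) ∧ (∀ j, g j ∈ S0) ∧
    D J₁ J₂ * x = ∑ j ∈ J₁, c j * f j - ∑ j ∈ J₂, c j * g j } with hBdef
  have hB : B.Finite := by
    have hsub : B ⊆ (fun q : Finset (Fin h) × Finset (Fin h) × (Fin h → ℚ) × (Fin h → ℚ) =>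
        (∑ j ∈ q.1, c j * q.2.2.1 j - ∑ j ∈ q.2.1, c j * q.2.2.2 j) / D q.1 q.2.1) ''
        (Set.univ ×ˢ Set.univ ×ˢ (Set.pi Set.univ fun _ => S0) ×ˢ
          (Set.pi Set.univ fun _ => S0)) := by
      rintro x ⟨J₁, J₂, hne, f, g, hf, hg, heq⟩
      refine ⟨⟨J₁, J₂, f, g⟩, ⟨trivial, trivial, fun j _ => hf j, fun j _ => hg j⟩, ?_⟩
      exact (div_eq_iff (hD J₁ J₂ hne)).mpr (by rw [← heq]; ring)
    exact Set.Finite.subset (Set.Finite.image _ (Set.finite_univ.prod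
      (Set.finite_univ.prod ((Set.Finite.pi fun _ => hS0).prod
        (Set.Finite.pi fun _ => hS0))))) hsub
  -- the bad set of parameters t
  have hinjQ : Function.Injective fun t : ℕ => ((b + N * t : ℤ) : ℚ) := by
    intro t₁ t₂ hEq
    have hNQ : (N : ℚ) ≠ 0 := by exact_mod_cast hNpos.ne'
    have h2 : (N : ℚ) * t₁ = (N : ℚ) * t₂ := by push_cast at hEq; linarith
    exact_mod_cast mul_left_cancel₀ hNQ h2
  have hTbad : {t : ℕ | ((b + N * t : ℤ) : ℚ) ∈ B}.Finite :=
    Set.Finite.preimage (hinjQ.injOn) hB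
  set G : Set ℕ := {t : ℕ | b.natAbs + 1 ≤ t} \ {t : ℕ | ((b + N * t : ℤ) : ℚ) ∈ B}
    with hGdef
  have hGinf : G.Infinite := by
    have h1 : {t : ℕ | b.natAbs + 1 ≤ t}.Infinite := Set.infinite_of_not_bddAbove (by
      intro ⟨m, hm⟩
      exact absurd (hm (show max m (b.natAbs) + 1 ∈ _ by
        simp only [Set.mem_setOf_eq]; omega)) (by omega))
    exact h1.diff hTbad
  have hapos : ∀ t ∈ G, 0 < b + N * t := by
    intro t ht
    have h1 : (b.natAbs : ℤ) + 1 ≤ t := by exact_mod_cast ht.1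
    have h2 : (t : ℤ) ≤ N * t := le_mul_of_one_le_left (by positivity) hNpos
    have h3 : -(b.natAbs : ℤ) ≤ b := by rw [← Int.abs_eq_natAbs]; exact neg_abs_le b
    linarith
  -- the map
  have hinjOn : Set.InjOn (fun t : ℕ => (b + N * t).toNat) G := by
    intro t₁ ht₁ t₂ ht₂ hEq
    have e1 : ((b + N * t₁).toNat : ℤ) = b + N * t₁ := Int.toNat_of_nonneg (hapos t₁ ht₁).le
    have e2 : ((b + N * t₂).toNat : ℤ) = b + N * t₂ := Int.toNat_of_nonneg (hapos t₂ ht₂).le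
    have : (b + N * t₁ : ℤ) = b + N * t₂ := by
      rw [← e1, ← e2]; exact_mod_cast congrArg (fun n : ℕ => (n : ℤ)) hEq
    apply hinjQ
    show ((b + N * t₁ : ℤ) : ℚ) = ((b + N * t₂ : ℤ) : ℚ)
    exact_mod_cast this
  apply Set.Infinite.mono ?_ (hGinf.image hinjOn)
  rintro a ⟨t, ht, rfl⟩
  set a : ℕ := (b + N * t).toNat with hadef
  have haz : (a : ℤ) = b + N * t := Int.toNat_of_nonneg (hapos t ht).le
  have haq : (a : ℚ) = (b : ℚ) + (N : ℚ) * t := by exact_mod_cast congrArg (fun z : ℤ => (z : ℚ)) haz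
  refine ⟨?_, ?_, ?_⟩
  · exact_mod_cast (haz ▸ hapos t ht)
  · intro p hp
    haveI : Fact p.Prime := ⟨hP₀p p hp⟩
    have hdvd : ((p ^ k : ℕ) : ℤ) ∣ N * t := by
      have hpN : ((p:ℤ))^k ∣ N := by
        rw [hNdef]; exact Finset.dvd_prod_of_mem (fun q : ℕ => ((q:ℤ))^k) hp
      push_cast
      exact hpN.mul_right _
    have hnorm : padicNorm p ((N : ℚ) * t) ≤ (p : ℚ) ^ (-(k:ℤ)) := by
      have := (padicNorm.dvd_iff_norm_le (p := p) (n := k) (z := N * t)).mp hdvd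
      convert this using 2
      push_cast; ring
    have hdiff : (a : ℚ) - (b : ℚ) = (N : ℚ) * t := by rw [haq]; ring
    rw [hdiff]
    calc ((padicNorm p ((N:ℚ) * t)) : ℝ) ≤ ((p : ℝ)) ^ (-(k:ℤ)) := by
          have h5 := (Rat.cast_le (K := ℝ)).mpr hnorm
          push_cast at h5
          exact h5
      _ ≤ ((2:ℝ)⁻¹)^k := by
          rw [zpow_neg, zpow_natCast, ← inv_pow]
          apply pow_le_pow_left₀ (by positivity)
          exact inv_anti₀ (by norm_num) (by exact_mod_cast (hP₀p p hp).two_le)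
      _ < ε := hk
  · intro J₁ J₂ hne
    rw [Set.disjoint_left]
    rintro x ⟨f, hf, hx1⟩ ⟨g, hg, hx2⟩
    have htB : ((b + N * t : ℤ) : ℚ) ∈ B := by
      refine ⟨J₁, J₂, hne, (fun j => if j ∈ J₁ then f j else 0),
        (fun j => if j ∈ J₂ then g j else 0), ?_, ?_, ?_⟩
      · intro j
        by_cases hj : j ∈ J₁
        · simp only [if_pos hj]; exact Set.mem_insert_of_mem _ (hf j hj)
        · simp [if_neg hj, hS0def]
      · intro j
        by_cases hj : j ∈ J₂
        · simp only [if_pos hj]; exact Set.mem_insert_of_mem _ (hg j hj)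
        · simp [if_neg hj, hS0def]
      · have e1 : ∑ j ∈ J₁, c j * (if j ∈ J₁ then f j else 0) = ∑ j ∈ J₁, c j • f j := by
          apply Finset.sum_congr rfl; intro j hj; rw [if_pos hj, smul_eq_mul]
        have e2 : ∑ j ∈ J₂, c j * (if j ∈ J₂ then g j else 0) = ∑ j ∈ J₂, c j • g j := by
          apply Finset.sum_congr rfl; intro j hj; rw [if_pos hj, smul_eq_mul]
        rw [e1, e2]
        have key : (∑ j ∈ J₁, c j • f j) + (∑ j ∈ J₁ᶜ, c j) • (a : ℚ)
            = (∑ j ∈ J₂, c j • g j) + (∑ j ∈ J₂ᶜ, c j) • (a : ℚ) := by rw [← hx1, ← hx2]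
        have hcast : ((b + N * t : ℤ) : ℚ) = (a : ℚ) := by rw [haq]; push_cast; ring
        rw [hcast, hDdef]
        simp only [smul_eq_mul] at key ⊢
        ring_nf
        ring_nf at key
        linarith
    exact ht.2 htB
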